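/- For D ∈ ℝ^{N×M}, define D_0 = 0 ∈ ℝ^M and D_i = Θ_r^k(D_{i-1}, row_i(D)) for 1 ≤ i ≤ N, where Θ_r^k(a,b)_i = max_{max(1,i-r) ≤ j ≤ min(i+k-1,M)} (|a_j| + |b_j|). Then Λ_r^k(D) := ‖D_N‖_∞ defines a norm on the space of N×M real matrices: Λ_r^k(D) = 0 iff D = 0, Λ_r^k(αD) = |α| Λ_r^k(D), and Λ_r^k(C+D) ≤ Λ_r^k(C) + Λ_r^k(D). -/

import Mathlib

/-- The operator `Θ_r^k : ℝ^M × ℝ^M → ℝ^M` defined (with 1-based indices) by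
`Θ_r^k(a,b)_i = max_{max(1,i-r) ≤ j ≤ min(i+k-1,M)} (|a_j| + |b_j|)`. -/
noncomputable def Theta (M r k : ℕ) (hk : 1 ≤ k) (a b : Fin M → ℝ) : Fin M → ℝ :=
  fun i =>
    (Finset.univ.filter fun j : Fin M =>
        (i : ℕ) + 1 - r ≤ (j : ℕ) + 1 ∧ (j : ℕ) + 1 ≤ (i : ℕ) + k).sup'
      ⟨i, Finset.mem_filter.mpr ⟨Finset.mem_univ i, Nat.sub_le _ _, by omega⟩⟩
      fun j => |a j| + |b j|

/-- The vectors `D_0 = 0`, `D_i = Θ_r^k(D_{i-1}, row_i D)` built from the rows of an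
`N × M` matrix `D`. -/
noncomputable def thetaSeq (M r k : ℕ) (hk : 1 ≤ k) {N : ℕ}
    (D : Fin N → Fin M → ℝ) : ℕ → Fin M → ℝ
  | 0 => 0
  | i + 1 =>
    if h : i < N then Theta M r k hk (thetaSeq M r k hk D i) (D ⟨i, h⟩)
    else thetaSeq M r k hk D i

/-- `Λ_r^k(D) = ‖D_N‖_∞` (sup norm of the final vector of the recursion). -/
noncomputable def Lam (M r k : ℕ) (hk : 1 ≤ k) {N : ℕ} (D : Fin N → Fin M → ℝ) : ℝ :=
  ‖thetaSeq M r k hk D N‖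


lemma theta_le_mem (M r k : ℕ) (hk : 1 ≤ k) (a b : Fin M → ℝ) (i : Fin M) {C : ℝ}
    (h : ∀ j ∈ Finset.univ.filter fun j : Fin M =>
      (i : ℕ) + 1 - r ≤ (j : ℕ) + 1 ∧ (j : ℕ) + 1 ≤ (i : ℕ) + k,
      |a j| + |b j| ≤ C) : Theta M r k hk a b i ≤ C := by
  unfold Theta; exact Finset.sup'_le _ (fun j => |a j| + |b j|) h

lemma le_theta_mem (M r k : ℕ) (hk : 1 ≤ k) (a b : Fin M → ℝ) (i j : Fin M)
    (hj : j ∈ Finset.univ.filter fun j : Fin M =>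
      (i : ℕ) + 1 - r ≤ (j : ℕ) + 1 ∧ (j : ℕ) + 1 ≤ (i : ℕ) + k) :
    |a j| + |b j| ≤ Theta M r k hk a b i := by
  unfold Theta; exact Finset.le_sup' (fun j => |a j| + |b j|) hj

lemma le_theta (M r k : ℕ) (hk : 1 ≤ k) (a b : Fin M → ℝ) (i : Fin M) :
    |a i| + |b i| ≤ Theta M r k hk a b i :=
  le_theta_mem M r k hk a b i i
    (Finset.mem_filter.mpr ⟨Finset.mem_univ i, Nat.sub_le _ _, by omega⟩)

lemma theta_le (M r k : ℕ) (hk : 1 ≤ k) (a b : Fin M → ℝ) (i : Fin M) {C : ℝ}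
    (h : ∀ j : Fin M, |a j| + |b j| ≤ C) : Theta M r k hk a b i ≤ C := by
  unfold Theta; exact Finset.sup'_le _ _ fun j _ => h j

lemma theta_nonneg (M r k : ℕ) (hk : 1 ≤ k) (a b : Fin M → ℝ) (i : Fin M) :
    0 ≤ Theta M r k hk a b i :=
  le_trans (by positivity) (le_theta M r k hk a b i)

lemma sup'_const_mul {β : Type*} {s : Finset β} (h : s.Nonempty) (f : β → ℝ) {c : ℝ}
    (hc : 0 ≤ c) : s.sup' h (fun j => c * f j) = c * s.sup' h f := by
  apply le_antisymm
  · exact Finset.sup'_le _ _ fun j hj => mul_le_mul_of_nonneg_left (Finset.le_sup' f hj) hc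
  · obtain ⟨j, hj, hje⟩ := Finset.exists_mem_eq_sup' h f
    rw [hje]; exact Finset.le_sup' (fun j => c * f j) hj

lemma thetaSeq_nonneg (M r k : ℕ) (hk : 1 ≤ k) {N : ℕ} (D : Fin N → Fin M → ℝ) :
    ∀ n i, 0 ≤ thetaSeq M r k hk D n i := by
  intro n
  induction n with
  | zero => intro i; simp [thetaSeq]
  | succ n ih =>
      intro i
      simp only [thetaSeq]
      split
      · exact theta_nonneg _ _ _ _ _ _ _
      · exact ih i

lemma thetaSeq_mono (M r k : ℕ) (hk : 1 ≤ k) {N : ℕ} (D : Fin N → Fin M → ℝ) :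
    ∀ n i, thetaSeq M r k hk D n i ≤ thetaSeq M r k hk D (n + 1) i := by
  intro n i
  simp only [thetaSeq]
  split
  · calc thetaSeq M r k hk D n i ≤ |thetaSeq M r k hk D n i| := le_abs_self _
      _ ≤ |thetaSeq M r k hk D n i| + |D ⟨n, by assumption⟩ i| :=
        le_add_of_nonneg_right (abs_nonneg _)
      _ ≤ _ := le_theta _ _ _ _ _ _ _
  · exact le_refl _

lemma thetaSeq_mono' (M r k : ℕ) (hk : 1 ≤ k) {N : ℕ} (D : Fin N → Fin M → ℝ)
    {m n : ℕ} (h : m ≤ n) (i : Fin M) :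
    thetaSeq M r k hk D m i ≤ thetaSeq M r k hk D n i := by
  induction n with
  | zero => simp_all
  | succ n ih =>
      rcases Nat.lt_or_ge m (n+1) with h' | h'
      · exact le_trans (ih (by omega)) (thetaSeq_mono M r k hk D n i)
      · have : m = n + 1 := by omega
        subst this; exact le_refl _

lemma entry_le_thetaSeq (M r k : ℕ) (hk : 1 ≤ k) {N : ℕ} (D : Fin N → Fin M → ℝ)
    (m : Fin N) (i : Fin M) : |D m i| ≤ thetaSeq M r k hk D N i := by
  have h1 : |D m i| ≤ thetaSeq M r k hk D ((m : ℕ) + 1) i := by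
    simp only [thetaSeq]
    rw [dif_pos m.isLt]
    calc |D m i| ≤ |thetaSeq M r k hk D (m : ℕ) i| + |D ⟨(m : ℕ), m.isLt⟩ i| := by
          simp only [Fin.eta]; exact le_add_of_nonneg_left (abs_nonneg _)
      _ ≤ _ := le_theta _ _ _ _ _ _ _
  exact le_trans h1 (thetaSeq_mono' M r k hk D m.isLt i)

lemma thetaSeq_zero (M r k : ℕ) (hk : 1 ≤ k) {N : ℕ} :
    ∀ n, thetaSeq M r k hk (0 : Fin N → Fin M → ℝ) n = 0 := by
  intro n
  induction n with
  | zero => rfl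
  | succ n ih =>
      funext i
      simp only [thetaSeq]
      split
      · refine le_antisymm (theta_le _ _ _ _ _ _ _ fun j => ?_) (theta_nonneg _ _ _ _ _ _ _)
        simp [ih]
      · simp [ih]

lemma thetaSeq_smul (M r k : ℕ) (hk : 1 ≤ k) {N : ℕ} (D : Fin N → Fin M → ℝ) (α : ℝ) :
    ∀ n, thetaSeq M r k hk (α • D) n = |α| • thetaSeq M r k hk D n := by
  intro n
  induction n with
  | zero => simp [thetaSeq]
  | succ n ih =>
      funext i
      simp only [thetaSeq, ih]
      split
      · show Theta M r k hk (|α| • thetaSeq M r k hk D n) ((α • D) _) i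
          = |α| * Theta M r k hk (thetaSeq M r k hk D n) _ i
        unfold Theta
        erw [← sup'_const_mul _ _ (abs_nonneg α)]
        apply Finset.sup'_congr _ rfl
        intro j _
        simp [Pi.smul_apply, abs_mul, mul_add, abs_abs]
      · rfl

lemma thetaSeq_add (M r k : ℕ) (hk : 1 ≤ k) {N : ℕ} (C D : Fin N → Fin M → ℝ) :
    ∀ n i, thetaSeq M r k hk (C + D) n i
      ≤ thetaSeq M r k hk C n i + thetaSeq M r k hk D n i := by
  intro n
  induction n with
  | zero => intro i; simp [thetaSeq]
  | succ n ih =>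
      intro i
      simp only [thetaSeq]
      split
      · next h =>
        apply theta_le_mem
        intro j hj
        have h1 : |thetaSeq M r k hk (C + D) n j|
            ≤ |thetaSeq M r k hk C n j| + |thetaSeq M r k hk D n j| := by
          rw [abs_of_nonneg (thetaSeq_nonneg M r k hk _ n j),
              abs_of_nonneg (thetaSeq_nonneg M r k hk C n j),
              abs_of_nonneg (thetaSeq_nonneg M r k hk D n j)]
          exact ih j
        have h2 : |(C + D) ⟨n, h⟩ j| ≤ |C ⟨n, h⟩ j| + |D ⟨n, h⟩ j| := by
          simpa using abs_add_le (C ⟨n, h⟩ j) (D ⟨n, h⟩ j)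
        calc |thetaSeq M r k hk (C + D) n j| + |(C + D) ⟨n, h⟩ j|
            ≤ (|thetaSeq M r k hk C n j| + |C ⟨n, h⟩ j|)
              + (|thetaSeq M r k hk D n j| + |D ⟨n, h⟩ j|) := by
              have := add_le_add h1 h2; linarith
          _ ≤ _ := add_le_add (le_theta_mem M r k hk _ _ i j hj)
              (le_theta_mem M r k hk _ _ i j hj)
      · exact ih i


/-- `Λ_r^k` is a norm on `N × M` real matrices: it is definite, absolutely
homogeneous, and satisfies the triangle inequality. -/
theorem lam_is_norm (M r k : ℕ) (hM : 1 ≤ M) (hr : r ≤ M) (hk : 1 ≤ k) (hkM : k ≤ M)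
    (N : ℕ) (hN : 1 ≤ N) :
    (∀ D : Fin N → Fin M → ℝ, Lam M r k hk D = 0 ↔ D = 0)
    ∧ (∀ (α : ℝ) (D : Fin N → Fin M → ℝ), Lam M r k hk (α • D) = |α| * Lam M r k hk D)
    ∧ (∀ C D : Fin N → Fin M → ℝ, Lam M r k hk (C + D) ≤ Lam M r k hk C + Lam M r k hk D)
    := by
  refine ⟨fun D => ⟨fun h => ?_, fun h => ?_⟩, fun α D => ?_, fun C D => ?_⟩
  · have hz : thetaSeq M r k hk D N = 0 := norm_eq_zero.mp h
    funext m i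
    have h1 := entry_le_thetaSeq M r k hk D m i
    rw [hz] at h1
    simp only [Pi.zero_apply] at h1 ⊢
    exact abs_eq_zero.mp (le_antisymm h1 (abs_nonneg _))
  · subst h
    simp [Lam, thetaSeq_zero]
  · simp [Lam, thetaSeq_smul, norm_smul]
  · unfold Lam
    rw [pi_norm_le_iff_of_nonneg (add_nonneg (norm_nonneg _) (norm_nonneg _))]
    intro i
    rw [Real.norm_eq_abs, abs_of_nonneg (thetaSeq_nonneg M r k hk _ N i)]
    calc thetaSeq M r k hk (C + D) N i
        ≤ thetaSeq M r k hk C N i + thetaSeq M r k hk D N i := thetaSeq_add M r k hk C D N i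
      _ ≤ ‖thetaSeq M r k hk C N‖ + ‖thetaSeq M r k hk D N‖ :=
          add_le_add
            (le_trans (le_abs_self _)
              (by simpa using norm_le_pi_norm (thetaSeq M r k hk C N) i))
            (le_trans (le_abs_self _)
              (by simpa using norm_le_pi_norm (thetaSeq M r k hk D N) i))
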